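/- Fix r ≥ 1, s ≥ 0, n = s + 1. Let 𝔸_a(Q,t) (1 ≤ a ≤ r) and Ω_i(Q,t) (0 ≤ i ≤ s) be pairwise commuting n×n matrices with entries in ℂ[[Q^1,…,Q^r,t^0,…,t^s]] satisfying Q^b∂𝔸_a/∂Q^b = Q^a∂𝔸_b/∂Q^a, ∂Ω_i/∂t^j = ∂Ω_j/∂t^i, ∂𝔸_a/∂t^i = Q^a∂Ω_i/∂Q^a, let e_0 ∈ ℂ^n and set p_a := 𝔸_a(0,0). Call a family (t̂^0,…,t̂^s) of elements of ℂ[[Q,t]] with t̂^i|_{Q=t=0} = 0 and with Jacobian matrix (∂t̂^i/∂t^j) invertible over ℂ[[Q,t]] a flat coordinate system for (𝔸, Ω, e_0) if there exists a basis (f_0,…,f_s) of ℂ^n such that Ω_j(Q,t)e_0 = Σ_i (∂t̂^i/∂t^j) f_i for all j and 𝔸_a(Q,t)e_0 = p_ae_0 + Σ_i Q^a(∂t̂^i/∂Q^a) f_i for all a. If (t̂^i) and (t'^i) are two flat coordinate systems for the same data (𝔸, Ω, e_0), then there exists an invertible matrix (b^i_j) ∈ GL_{s+1}(ℂ) such that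 t'^i = Σ_{j=0}^{s} b^i_j t̂^j for all i. -/

import Mathlib

noncomputable section

/-- `ℂ((ħ⁻¹))`, realized as formal Laurent series (Hahn series over `ℤ`) in the
variable `X = ħ⁻¹`; the coefficient of `ħ^k` is the coefficient at `z = -k`. -/
abbrev LH : Type := LaurentSeries ℂ

/-- The element `ħ = X⁻¹`: the Hahn series with single coefficient `1` in degree `-1`. -/
def hbar : LH := HahnSeries.single (-1 : ℤ) 1

/-- `f` lies in the subring `ℂ[ħ]` (no positive powers of the variable `X = ħ⁻¹`). -/
def InPolyH (f : LH) : Prop := ∀ z : ℤ, 0 < z → f.coeff z = 0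

/-- `f` lies in the subring `ℂ[[ħ⁻¹]]`. -/
def InPSinv (f : LH) : Prop := ∀ z : ℤ, z < 0 → f.coeff z = 0

/-- `f` lies in `ħ⁻¹ · ℂ[[ħ⁻¹]]` (only strictly negative powers of `ħ`). -/
def InPSinvPos (f : LH) : Prop := ∀ z : ℤ, z ≤ 0 → f.coeff z = 0

/-- `f` is a constant (a complex scalar), i.e. independent of `ħ`. -/
def IsConstL (f : LH) : Prop := ∀ z : ℤ, z ≠ 0 → f.coeff z = 0

section ops

variable {σ R : Type} [CommRing R] {n : ℕ}

/-- Formal partial derivative `∂/∂x` on multivariate formal power series. -/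
def pd (x : σ) (f : MvPowerSeries σ R) : MvPowerSeries σ R :=
  fun d => ((d x + 1 : ℕ) : R) * MvPowerSeries.coeff (R := R) (d + Finsupp.single x 1) f

/-- Euler derivative `x·∂/∂x` on multivariate formal power series. -/
def eulerD (x : σ) (f : MvPowerSeries σ R) : MvPowerSeries σ R :=
  fun d => ((d x : ℕ) : R) * MvPowerSeries.coeff (R := R) d f

/-- Entrywise partial derivative of a matrix of power series. -/
def mpd (x : σ) (M : Matrix (Fin n) (Fin n) (MvPowerSeries σ R)) :
    Matrix (Fin n) (Fin n) (MvPowerSeries σ R) := M.map (pd x)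

/-- Entrywise Euler derivative of a matrix of power series. -/
def meu (x : σ) (M : Matrix (Fin n) (Fin n) (MvPowerSeries σ R)) :
    Matrix (Fin n) (Fin n) (MvPowerSeries σ R) := M.map (eulerD x)

/-- A constant matrix, viewed as a matrix of power series. -/
def mC (M : Matrix (Fin n) (Fin n) R) : Matrix (Fin n) (Fin n) (MvPowerSeries σ R) :=
  M.map (MvPowerSeries.C (σ := σ) (R := R))

/-- Constant term (restriction to `Q = t = 0`) of a matrix of power series. -/
def m0 (M : Matrix (Fin n) (Fin n) (MvPowerSeries σ R)) : Matrix (Fin n) (Fin n) R :=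
  M.map (MvPowerSeries.constantCoeff (σ := σ) (R := R))

end ops

section lops

variable {σ : Type} {n : ℕ}

/-- The scalar `ħ` inside `ℂ((ħ⁻¹))[[Q,t]]`. -/
def hbarC (σ : Type) : MvPowerSeries σ LH := MvPowerSeries.C (σ := σ) (R := LH) hbar

/-- The entries of the matrix `M` lie in `ℂ[ħ][[Q,t]]`. -/
def MatPolyH (M : Matrix (Fin n) (Fin n) (MvPowerSeries σ LH)) : Prop :=
  ∀ (i j : Fin n) (d : σ →₀ ℕ), InPolyH (MvPowerSeries.coeff (R := LH) d (M i j))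

/-- The entries of the matrix `M` lie in `ℂ[[Q,t]]`, i.e. are independent of `ħ`. -/
def MatNoH (M : Matrix (Fin n) (Fin n) (MvPowerSeries σ LH)) : Prop :=
  ∀ (i j : Fin n) (d : σ →₀ ℕ), IsConstL (MvPowerSeries.coeff (R := LH) d (M i j))

/-- The first-order operator `v ↦ ħ·(x ∂/∂x)v + A·v` on column vectors. -/
def nablaE (x : σ) (A : Matrix (Fin n) (Fin n) (MvPowerSeries σ LH))
    (v : Fin n → MvPowerSeries σ LH) : Fin n → MvPowerSeries σ LH :=
  fun i => hbarC σ * eulerD x (v i) + A.mulVec v i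

/-- The first-order operator `v ↦ ħ·(∂/∂x)v + A·v` on column vectors. -/
def nablaP (x : σ) (A : Matrix (Fin n) (Fin n) (MvPowerSeries σ LH))
    (v : Fin n → MvPowerSeries σ LH) : Fin n → MvPowerSeries σ LH :=
  fun i => hbarC σ * pd x (v i) + A.mulVec v i

end lops

/-- `(t̂^0, …, t̂^s)` is a *flat coordinate system* for the data `(𝔸, Ω, e₀)`:
the `t̂^i` vanish at the origin, their Jacobian `(∂t̂^i/∂t^j)` is invertible over
`ℂ[[Q,t]]`, and there is a basis `(f_0, …, f_s)` of `ℂ^n` with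
`Ω_j e₀ = Σ_i (∂t̂^i/∂t^j) f_i` and `𝔸_a e₀ = p_a e₀ + Σ_i Q^a(∂t̂^i/∂Q^a) f_i`,
where `p_a := 𝔸_a(0,0)`. -/
def IsFlatCoordSystem (r s : ℕ)
    (𝔸 : Fin r → Matrix (Fin (s + 1)) (Fin (s + 1))
      (MvPowerSeries (Fin r ⊕ Fin (s + 1)) ℂ))
    (Ω : Fin (s + 1) → Matrix (Fin (s + 1)) (Fin (s + 1))
      (MvPowerSeries (Fin r ⊕ Fin (s + 1)) ℂ))
    (e₀ : Fin (s + 1) → ℂ)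
    (that : Fin (s + 1) → MvPowerSeries (Fin r ⊕ Fin (s + 1)) ℂ) : Prop :=
  (∀ i, MvPowerSeries.constantCoeff (σ := Fin r ⊕ Fin (s + 1)) (R := ℂ) (that i) = 0) ∧
  IsUnit (Matrix.of fun i j => pd (Sum.inr j) (that i)) ∧
  ∃ f : Fin (s + 1) → Fin (s + 1) → ℂ,
    LinearIndependent ℂ f ∧ Submodule.span ℂ (Set.range f) = ⊤ ∧
    (∀ j, (Ω j).mulVec (fun k => MvPowerSeries.C (σ := Fin r ⊕ Fin (s + 1)) (R := ℂ) (e₀ k))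
        = fun k => ∑ i, pd (Sum.inr j) (that i)
            * MvPowerSeries.C (σ := Fin r ⊕ Fin (s + 1)) (R := ℂ) (f i k)) ∧
    (∀ a, (𝔸 a).mulVec (fun k => MvPowerSeries.C (σ := Fin r ⊕ Fin (s + 1)) (R := ℂ) (e₀ k))
        = fun k => MvPowerSeries.C (σ := Fin r ⊕ Fin (s + 1)) (R := ℂ) ((m0 (𝔸 a)).mulVec e₀ k)
            + ∑ i, eulerD (Sum.inl a) (that i)
                * MvPowerSeries.C (σ := Fin r ⊕ Fin (s + 1)) (R := ℂ) (f i k))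

section proofaux

variable {σ : Type}

lemma coeff_pd (x : σ) (f : MvPowerSeries σ ℂ) (e : σ →₀ ℕ) :
    MvPowerSeries.coeff (R := ℂ) e (pd x f) =
      ((e x + 1 : ℕ) : ℂ) * MvPowerSeries.coeff (R := ℂ) (e + Finsupp.single x 1) f := rfl

lemma coeff_eulerD (x : σ) (f : MvPowerSeries σ ℂ) (e : σ →₀ ℕ) :
    MvPowerSeries.coeff (R := ℂ) e (eulerD x f) = ((e x : ℕ) : ℂ) * MvPowerSeries.coeff (R := ℂ) e f := rfl

lemma pd_sub (x : σ) (f g : MvPowerSeries σ ℂ) : pd x (f - g) = pd x f - pd x g := by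
  apply MvPowerSeries.ext; intro e
  simp only [coeff_pd, map_sub]; ring

lemma eulerD_sub (x : σ) (f g : MvPowerSeries σ ℂ) :
    eulerD x (f - g) = eulerD x f - eulerD x g := by
  apply MvPowerSeries.ext; intro e
  simp only [coeff_eulerD, map_sub]; ring

lemma pd_C_mul (x : σ) (c : ℂ) (f : MvPowerSeries σ ℂ) :
    pd x (MvPowerSeries.C (σ := σ) (R := ℂ) c * f) = MvPowerSeries.C (σ := σ) (R := ℂ) c * pd x f := by
  apply MvPowerSeries.ext; intro e
  simp only [coeff_pd, MvPowerSeries.coeff_C_mul]; ring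

lemma eulerD_C_mul (x : σ) (c : ℂ) (f : MvPowerSeries σ ℂ) :
    eulerD x (MvPowerSeries.C (σ := σ) (R := ℂ) c * f) = MvPowerSeries.C (σ := σ) (R := ℂ) c * eulerD x f := by
  apply MvPowerSeries.ext; intro e
  simp only [coeff_eulerD, MvPowerSeries.coeff_C_mul]; ring

lemma pd_sum {ι : Type*} (x : σ) (t : Finset ι) (f : ι → MvPowerSeries σ ℂ) :
    pd x (∑ i ∈ t, f i) = ∑ i ∈ t, pd x (f i) := by
  apply MvPowerSeries.ext; intro e
  simp only [coeff_pd, map_sum, Finset.mul_sum]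

lemma eulerD_sum {ι : Type*} (x : σ) (t : Finset ι) (f : ι → MvPowerSeries σ ℂ) :
    eulerD x (∑ i ∈ t, f i) = ∑ i ∈ t, eulerD x (f i) := by
  apply MvPowerSeries.ext; intro e
  simp only [coeff_eulerD, map_sum, Finset.mul_sum]

/-- The key vanishing lemma: a power series all of whose `t`-partials and
`Q`-Euler-derivatives vanish, with zero constant term, is zero. -/
lemma vanish {r s : ℕ} (u : MvPowerSeries (Fin r ⊕ Fin (s + 1)) ℂ)
    (h0 : MvPowerSeries.constantCoeff (σ := Fin r ⊕ Fin (s + 1)) (R := ℂ) u = 0)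
    (hQ : ∀ a, eulerD (Sum.inl a) u = 0)
    (hT : ∀ j, pd (Sum.inr j) u = 0) : u = 0 := by
  apply MvPowerSeries.ext; intro e
  rw [map_zero]
  rcases eq_or_ne e 0 with rfl | he
  · simpa [MvPowerSeries.coeff_zero_eq_constantCoeff] using h0
  · obtain ⟨x, hx⟩ : ∃ x, e x ≠ 0 := by
      by_contra hcon; push_neg at hcon
      exact he (Finsupp.ext hcon)
    cases x with
    | inl a =>
      have h := congrArg (MvPowerSeries.coeff (R := ℂ) e) (hQ a)
      rw [coeff_eulerD, map_zero] at h
      exact (mul_eq_zero.mp h).resolve_left (by exact_mod_cast hx)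
    | inr j =>
      have hle : Finsupp.single (Sum.inr j : Fin r ⊕ Fin (s + 1)) 1 ≤ e := by
        rw [Finsupp.single_le_iff]
        exact Nat.one_le_iff_ne_zero.mpr hx
      have heq : (e - Finsupp.single (Sum.inr j : Fin r ⊕ Fin (s + 1)) 1)
          + Finsupp.single (Sum.inr j : Fin r ⊕ Fin (s + 1)) 1 = e :=
        tsub_add_cancel_of_le hle
      have h := congrArg (MvPowerSeries.coeff (R := ℂ)
        (e - Finsupp.single (Sum.inr j : Fin r ⊕ Fin (s + 1)) 1)) (hT j)
      rw [coeff_pd, map_zero, heq] at h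
      exact (mul_eq_zero.mp h).resolve_left (Nat.cast_ne_zero.mpr (Nat.succ_ne_zero _))

/-- Coordinates with respect to a linearly independent family, with power-series
coefficients, are unique. -/
lemma coords {n : ℕ} (f' : Fin n → Fin n → ℂ) (hli : LinearIndependent ℂ f')
    (g h : Fin n → MvPowerSeries σ ℂ)
    (H : ∀ k, ∑ i, g i * MvPowerSeries.C (σ := σ) (R := ℂ) (f' i k)
        = ∑ i, h i * MvPowerSeries.C (σ := σ) (R := ℂ) (f' i k)) :
    g = h := by
  funext i
  apply MvPowerSeries.ext; intro e
  have key : ∑ i, (MvPowerSeries.coeff (R := ℂ) e (g i) - MvPowerSeries.coeff (R := ℂ) e (h i)) • f' i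
      = 0 := by
    funext k
    have hk := congrArg (MvPowerSeries.coeff (R := ℂ) e) (H k)
    simp only [map_sum, MvPowerSeries.coeff_mul_C] at hk
    simp only [Finset.sum_apply, Pi.smul_apply, smul_eq_mul, Pi.zero_apply, sub_mul,
      Finset.sum_sub_distrib, hk, sub_self]
  have := Fintype.linearIndependent_iff.mp hli
    (fun i => MvPowerSeries.coeff (R := ℂ) e (g i) - MvPowerSeries.coeff (R := ℂ) e (h i)) key i
  exact sub_eq_zero.mp this

end proofaux

/-- uniqueness of flat coordinates up to a linear transformation
in `GL_{s+1}(ℂ)`: two flat coordinate systems for the same data `(𝔸, Ω, e₀)` differ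
by an invertible constant matrix. -/
theorem statement14 (r s : ℕ) (hr : 1 ≤ r)
    (𝔸 : Fin r → Matrix (Fin (s + 1)) (Fin (s + 1))
      (MvPowerSeries (Fin r ⊕ Fin (s + 1)) ℂ))
    (Ω : Fin (s + 1) → Matrix (Fin (s + 1)) (Fin (s + 1))
      (MvPowerSeries (Fin r ⊕ Fin (s + 1)) ℂ))
    -- the connection matrices pairwise commute and are integrable
    (hAA : ∀ a b, 𝔸 a * 𝔸 b = 𝔸 b * 𝔸 a)
    (hAO : ∀ a i, 𝔸 a * Ω i = Ω i * 𝔸 a)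
    (hOO : ∀ i j, Ω i * Ω j = Ω j * Ω i)
    (hiQQ : ∀ a b, meu (Sum.inl b) (𝔸 a) = meu (Sum.inl a) (𝔸 b))
    (hiTT : ∀ i j, mpd (Sum.inr j) (Ω i) = mpd (Sum.inr i) (Ω j))
    (hiQT : ∀ a i, mpd (Sum.inr i) (𝔸 a) = meu (Sum.inl a) (Ω i))
    (e₀ : Fin (s + 1) → ℂ)
    (that that' : Fin (s + 1) → MvPowerSeries (Fin r ⊕ Fin (s + 1)) ℂ)
    (h1 : IsFlatCoordSystem r s 𝔸 Ω e₀ that)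
    (h2 : IsFlatCoordSystem r s 𝔸 Ω e₀ that') :
    ∃ b : Matrix (Fin (s + 1)) (Fin (s + 1)) ℂ, IsUnit b ∧
      ∀ i, that' i = ∑ j, MvPowerSeries.C (σ := Fin r ⊕ Fin (s + 1)) (R := ℂ) (b i j) * that j := by
  
  classical
  obtain ⟨h1c, -, f, hfli, hfsp, hfΩ, hfA⟩ := h1
  obtain ⟨h2c, -, f', hfli', hfsp', hfΩ', hfA'⟩ := h2
  let B : Module.Basis (Fin (s + 1)) ℂ (Fin (s + 1) → ℂ) := Module.Basis.mk hfli (by rw [hfsp])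
  let B' : Module.Basis (Fin (s + 1)) ℂ (Fin (s + 1) → ℂ) := Module.Basis.mk hfli' (by rw [hfsp'])
  set d : Fin (s + 1) → Fin (s + 1) → ℂ := fun i m => B'.repr (f i) m with hd
  have hf_expand : ∀ i k, f i k = ∑ m, d i m * f' m k := by
    intro i k
    have h := (B'.sum_repr (f i)).symm
    have hk := congrFun h k
    simpa [d, B', Module.Basis.coe_mk, Finset.sum_apply] using hk
  -- rearrangement of the f-combination into an f'-combination
  have hrearr : ∀ g : Fin (s + 1) → MvPowerSeries (Fin r ⊕ Fin (s + 1)) ℂ, ∀ k,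
      ∑ i, g i * MvPowerSeries.C (σ := Fin r ⊕ Fin (s + 1)) (R := ℂ) (f i k) = ∑ m, (∑ i, MvPowerSeries.C (σ := Fin r ⊕ Fin (s + 1)) (R := ℂ) (d i m) * g i) * MvPowerSeries.C (σ := Fin r ⊕ Fin (s + 1)) (R := ℂ) (f' m k) := by
    intro g k
    calc ∑ i, g i * MvPowerSeries.C (σ := Fin r ⊕ Fin (s + 1)) (R := ℂ) (f i k)
        = ∑ i, ∑ m, MvPowerSeries.C (σ := Fin r ⊕ Fin (s + 1)) (R := ℂ) (d i m) * g i * MvPowerSeries.C (σ := Fin r ⊕ Fin (s + 1)) (R := ℂ) (f' m k) := by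
          apply Finset.sum_congr rfl; intro i _
          rw [hf_expand i k, map_sum, Finset.mul_sum]
          apply Finset.sum_congr rfl; intro m _
          rw [map_mul]; ring
      _ = ∑ m, ∑ i, MvPowerSeries.C (σ := Fin r ⊕ Fin (s + 1)) (R := ℂ) (d i m) * g i * MvPowerSeries.C (σ := Fin r ⊕ Fin (s + 1)) (R := ℂ) (f' m k) := Finset.sum_comm
      _ = ∑ m, (∑ i, MvPowerSeries.C (σ := Fin r ⊕ Fin (s + 1)) (R := ℂ) (d i m) * g i) * MvPowerSeries.C (σ := Fin r ⊕ Fin (s + 1)) (R := ℂ) (f' m k) := by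
          apply Finset.sum_congr rfl; intro m _
          rw [Finset.sum_mul]
  -- the Ω-equations give equality of t-partials
  have HΩ : ∀ j, (fun m => pd (Sum.inr j) (that' m))
      = fun m => ∑ i, MvPowerSeries.C (σ := Fin r ⊕ Fin (s + 1)) (R := ℂ) (d i m) * pd (Sum.inr j) (that i) := by
    intro j
    apply coords f' hfli'
    intro k
    have h1k := congrFun (hfΩ j) k
    have h2k := congrFun (hfΩ' j) k
    rw [← h2k, h1k, hrearr]
  -- the 𝔸-equations give equality of Euler derivatives
  have HA : ∀ a, (fun m => eulerD (Sum.inl a) (that' m))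
      = fun m => ∑ i, MvPowerSeries.C (σ := Fin r ⊕ Fin (s + 1)) (R := ℂ) (d i m) * eulerD (Sum.inl a) (that i) := by
    intro a
    apply coords f' hfli'
    intro k
    have h1k := congrFun (hfA a) k
    have h2k := congrFun (hfA' a) k
    have := h1k.symm.trans h2k
    have h3 := add_left_cancel this
    rw [← h3, hrearr]
  -- the difference is killed by all derivations, hence zero
  have hmain : ∀ m, that' m = ∑ i, MvPowerSeries.C (σ := Fin r ⊕ Fin (s + 1)) (R := ℂ) (d i m) * that i := by
    intro m
    have hz : that' m - ∑ i, MvPowerSeries.C (σ := Fin r ⊕ Fin (s + 1)) (R := ℂ) (d i m) * that i = 0 := by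
      apply vanish
      · rw [map_sub, map_sum, h2c]
        simp only [map_mul, h1c, mul_zero, Finset.sum_const_zero, sub_zero]
      · intro a
        rw [eulerD_sub, eulerD_sum, congrFun (HA a) m, sub_eq_zero]
        exact Finset.sum_congr rfl fun i _ => (eulerD_C_mul _ _ _).symm
      · intro j
        rw [pd_sub, pd_sum, congrFun (HΩ j) m, sub_eq_zero]
        exact Finset.sum_congr rfl fun i _ => (pd_C_mul _ _ _).symm
    exact sub_eq_zero.mp hz
  refine ⟨B'.toMatrix ⇑B, ?_, ?_⟩
  · haveI := B'.invertibleToMatrix B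
    exact isUnit_of_invertible _
  · intro i
    rw [hmain i]
    apply Finset.sum_congr rfl; intro j _
    congr 1
    simp only [Module.Basis.toMatrix_apply, B, Module.Basis.coe_mk, d]
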